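/- Let a₁, …, aₙ ∈ ℂ with |a_j| < 1 for all j, let λ ∈ ℂ with |λ| = 1, and let U^λ be the (n+1)×(n+1) unitary matrix defined by: U^λ_{ii} = a_i for 1 ≤ i ≤ n; U^λ_{ij} = (∏_{k=i+1}^{j−1} (−ā_k))·√(1−|a_i|²)·√(1−|a_j|²) for 1 ≤ i < j ≤ n; U^λ_{ij} = 0 for 1 ≤ j < i ≤ n; U^λ_{n+1,j} = λ·(∏_{k=1}^{j−1} (−ā_k))·√(1−|a_j|²) for 1 ≤ j ≤ n; U^λ_{i,n+1} = (∏_{k=i+1}^{n} (−ā_k))·√(1−|a_i|²) for 1 ≤ i ≤ n; U^λ_{n+1,n+1} = λ·∏_{k=1}^{n} (−ā_k). Then the set of eigenvalues of U^λ equals { μ ∈ ℂ : μ·∏_{j=1}^{n} (μ − a_j) = λ·∏_{j=1}^{n} (1 − ā_j μ) }; this set has exactly n+1 elements, and every element has modulus 1. -/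

import Mathlib

/-- The unitary 1-dilation `U^λ` of the compressed shift matrix associated with the finite
Blaschke product with zeros `a 0, …, a (n-1)` (indices here are 0-based; the entry
`U^λ_{ij}` of the statement, with 1-based indices, is `Ulam a λ (i-1) (j-1)`). -/
noncomputable def Ulam {n : ℕ} (a : Fin n → ℂ) (lam : ℂ) :
    Matrix (Fin (n + 1)) (Fin (n + 1)) ℂ :=
  Matrix.of fun i j =>
    if hi : (i : ℕ) < n then
      if hj : (j : ℕ) < n then
        if (i : ℕ) = (j : ℕ) then a ⟨i, hi⟩
        else if (i : ℕ) < (j : ℕ) then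
          (∏ k ∈ Finset.univ.filter (fun k : Fin n => (i : ℕ) < (k : ℕ) ∧ (k : ℕ) < (j : ℕ)),
              (-(starRingEnd ℂ) (a k))) *
            ((Real.sqrt (1 - ‖a ⟨i, hi⟩‖ ^ 2) : ℝ) : ℂ) *
            ((Real.sqrt (1 - ‖a ⟨j, hj⟩‖ ^ 2) : ℝ) : ℂ)
        else 0
      else
        (∏ k ∈ Finset.univ.filter (fun k : Fin n => (i : ℕ) < (k : ℕ)),
            (-(starRingEnd ℂ) (a k))) *
          ((Real.sqrt (1 - ‖a ⟨i, hi⟩‖ ^ 2) : ℝ) : ℂ)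
    else
      if hj : (j : ℕ) < n then
        lam * (∏ k ∈ Finset.univ.filter (fun k : Fin n => (k : ℕ) < (j : ℕ)),
            (-(starRingEnd ℂ) (a k))) *
          ((Real.sqrt (1 - ‖a ⟨j, hj⟩‖ ^ 2) : ℝ) : ℂ)
      else lam * ∏ k : Fin n, (-(starRingEnd ℂ) (a k))


open Finset Polynomial Matrix


private lemma telescopeU {n : ℕ} (A B : Fin n → ℂ) (s : Finset (Fin n)) :
    ∑ j ∈ s, (∏ k ∈ s.filter (· < j), B k) * ((A j - B j) * ∏ k ∈ s.filter (j < ·), A k)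
      = ∏ k ∈ s, A k - ∏ k ∈ s, B k := by
  induction s using Finset.induction_on_max with
  | empty => simp
  | insert m t hm ih =>
    have hmt : m ∉ t := fun h => lt_irrefl m (hm m h)
    rw [Finset.sum_insert hmt]
    have h1 : (insert m t).filter (· < m) = t := by
      rw [Finset.filter_insert]
      simp only [lt_irrefl, if_false]
      exact Finset.filter_true_of_mem (fun x hx => hm x hx)
    have h2 : (insert m t).filter (m < ·) = ∅ := by
      rw [Finset.filter_insert]
      simp only [lt_irrefl, if_false]
      exact Finset.filter_false_of_mem (fun x hx => not_lt.2 (hm x hx).le)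
    rw [h1, h2]
    have h3 : ∀ j ∈ t, (∏ k ∈ (insert m t).filter (· < j), B k) *
        ((A j - B j) * ∏ k ∈ (insert m t).filter (j < ·), A k)
        = A m * ((∏ k ∈ t.filter (· < j), B k) * ((A j - B j) * ∏ k ∈ t.filter (j < ·), A k)) := by
      intro j hj
      have e1 : (insert m t).filter (· < j) = t.filter (· < j) := by
        rw [Finset.filter_insert, if_neg (not_lt.2 (hm j hj).le)]
      have e2 : (insert m t).filter (j < ·) = insert m (t.filter (j < ·)) := by
        rw [Finset.filter_insert, if_pos (hm j hj)]
      have hm2 : m ∉ t.filter (j < ·) := fun h => hmt (Finset.mem_of_mem_filter m h)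
      rw [e1, e2, Finset.prod_insert hm2]
      ring
    rw [Finset.sum_congr rfl h3, ← Finset.mul_sum, ih, Finset.prod_insert hmt,
      Finset.prod_insert hmt, Finset.prod_empty]
    ring


private lemma splitUnivU {n : ℕ} (i : Fin n) (f : Fin n → ℂ) :
    ∏ k, f k = (∏ k ∈ univ.filter (fun k : Fin n => (k : ℕ) < (i : ℕ)), f k) *
      (f i * ∏ k ∈ univ.filter (fun k : Fin n => (i : ℕ) < (k : ℕ)), f k) := by
  have hset : (univ : Finset (Fin n)) =
      (univ.filter (fun k : Fin n => (k : ℕ) < (i : ℕ))) ∪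
        insert i (univ.filter (fun k : Fin n => (i : ℕ) < (k : ℕ))) := by
    ext k
    simp only [mem_univ, mem_union, mem_insert, mem_filter, true_and, Fin.ext_iff, true_iff]
    omega
  have hd : Disjoint (univ.filter (fun k : Fin n => (k : ℕ) < (i : ℕ)))
      (insert i (univ.filter (fun k : Fin n => (i : ℕ) < (k : ℕ)))) := by
    simp only [Finset.disjoint_left, mem_filter, mem_insert, mem_univ, true_and, Fin.ext_iff]
    omega
  have hi : i ∉ univ.filter (fun k : Fin n => (i : ℕ) < (k : ℕ)) := by simp
  conv_lhs => rw [hset]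
  rw [Finset.prod_union hd, Finset.prod_insert hi]

private lemma splitLtU {n : ℕ} (i j : Fin n) (hij : (i : ℕ) < (j : ℕ)) (f : Fin n → ℂ) :
    ∏ k ∈ univ.filter (fun k : Fin n => (k : ℕ) < (j : ℕ)), f k =
      (∏ k ∈ univ.filter (fun k : Fin n => (k : ℕ) < (i : ℕ)), f k) *
      (f i * ∏ k ∈ univ.filter (fun k : Fin n => (i : ℕ) < (k : ℕ) ∧ (k : ℕ) < (j : ℕ)), f k) := by
  have hset : univ.filter (fun k : Fin n => (k : ℕ) < (j : ℕ)) =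
      (univ.filter (fun k : Fin n => (k : ℕ) < (i : ℕ))) ∪
        insert i (univ.filter (fun k : Fin n => (i : ℕ) < (k : ℕ) ∧ (k : ℕ) < (j : ℕ))) := by
    ext k
    simp only [mem_union, mem_insert, mem_filter, mem_univ, true_and, Fin.ext_iff]
    omega
  have hd : Disjoint (univ.filter (fun k : Fin n => (k : ℕ) < (i : ℕ)))
      (insert i (univ.filter (fun k : Fin n => (i : ℕ) < (k : ℕ) ∧ (k : ℕ) < (j : ℕ)))) := by
    simp only [Finset.disjoint_left, mem_filter, mem_insert, mem_univ, true_and, Fin.ext_iff]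
    omega
  have hi : i ∉ univ.filter (fun k : Fin n => (i : ℕ) < (k : ℕ) ∧ (k : ℕ) < (j : ℕ)) := by simp
  rw [hset, Finset.prod_union hd, Finset.prod_insert hi]

private lemma sqsqU {a : ℂ} (ha : ‖a‖ < 1) :
    ((Real.sqrt (1 - ‖a‖ ^ 2) : ℝ) : ℂ) * ((Real.sqrt (1 - ‖a‖ ^ 2) : ℝ) : ℂ)
      = 1 - (starRingEnd ℂ) a * a := by
  rw [← Complex.ofReal_mul, Real.mul_self_sqrt (by nlinarith [norm_nonneg a])]
  have h2 : a * (starRingEnd ℂ) a = ((‖a‖ : ℂ)) ^ 2 := by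
    rw [Complex.mul_conj, Complex.normSq_eq_norm_sq]; norm_cast
  rw [mul_comm ((starRingEnd ℂ) a) a, h2]
  push_cast
  ring

private lemma keyU {n : ℕ} (a : Fin n → ℂ) (ha : ∀ j, ‖a j‖ < 1) (μ : ℂ)
    (i : Fin n) :
    a i * (∏ k ∈ univ.filter (fun k : Fin n => (i : ℕ) < (k : ℕ)), (1 - (starRingEnd ℂ) (a k) * μ))
      + (∑ j ∈ univ.filter (fun k : Fin n => (i : ℕ) < (k : ℕ)),
          (∏ k ∈ univ.filter (fun k : Fin n => (i : ℕ) < (k : ℕ) ∧ (k : ℕ) < (j : ℕ)),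
              (-(starRingEnd ℂ) (a k)))
          * (((Real.sqrt (1 - ‖a j‖ ^ 2) : ℝ) : ℂ) *
              ((Real.sqrt (1 - ‖a j‖ ^ 2) : ℝ) : ℂ))
          * (∏ k ∈ univ.filter (fun k : Fin n => (j : ℕ) < (k : ℕ)), (1 - (starRingEnd ℂ) (a k) * μ))
          * ((μ - a i) *
              ∏ k ∈ univ.filter (fun k : Fin n => (i : ℕ) < (k : ℕ) ∧ (k : ℕ) < (j : ℕ)), (μ - a k)))
      + (∏ k ∈ univ.filter (fun k : Fin n => (i : ℕ) < (k : ℕ)), (-(starRingEnd ℂ) (a k)))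
          * ((μ - a i) * ∏ k ∈ univ.filter (fun k : Fin n => (i : ℕ) < (k : ℕ)), (μ - a k))
      = μ * ∏ k ∈ univ.filter (fun k : Fin n => (i : ℕ) < (k : ℕ)), (1 - (starRingEnd ℂ) (a k) * μ) := by
  set s := univ.filter (fun k : Fin n => (i : ℕ) < (k : ℕ)) with hs
  set A : Fin n → ℂ := fun k => 1 - (starRingEnd ℂ) (a k) * μ with hA
  set B : Fin n → ℂ := fun k => (-(starRingEnd ℂ) (a k)) * (μ - a k) with hB
  have tel := telescopeU A B s
  have hterm : ∀ j ∈ s,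
      (∏ k ∈ univ.filter (fun k : Fin n => (i : ℕ) < (k : ℕ) ∧ (k : ℕ) < (j : ℕ)),
          (-(starRingEnd ℂ) (a k)))
        * (((Real.sqrt (1 - ‖a j‖ ^ 2) : ℝ) : ℂ) *
            ((Real.sqrt (1 - ‖a j‖ ^ 2) : ℝ) : ℂ))
        * (∏ k ∈ univ.filter (fun k : Fin n => (j : ℕ) < (k : ℕ)), (1 - (starRingEnd ℂ) (a k) * μ))
        * ((μ - a i) *
            ∏ k ∈ univ.filter (fun k : Fin n => (i : ℕ) < (k : ℕ) ∧ (k : ℕ) < (j : ℕ)), (μ - a k))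
      = (μ - a i) *
          ((∏ k ∈ s.filter (· < j), B k) * ((A j - B j) * ∏ k ∈ s.filter (j < ·), A k)) := by
    intro j hj
    have hij : (i : ℕ) < (j : ℕ) := by
      rw [hs] at hj; simpa using hj
    have e1 : s.filter (· < j) =
        univ.filter (fun k : Fin n => (i : ℕ) < (k : ℕ) ∧ (k : ℕ) < (j : ℕ)) := by
      rw [hs, Finset.filter_filter]
      apply Finset.filter_congr
      intro k _
      simp only [Fin.lt_def]
    have e2 : s.filter (j < ·) = univ.filter (fun k : Fin n => (j : ℕ) < (k : ℕ)) := by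
      rw [hs, Finset.filter_filter]
      ext k
      simp only [mem_filter, mem_univ, true_and, Fin.lt_def]
      omega
    have e3 : A j - B j = ((Real.sqrt (1 - ‖a j‖ ^ 2) : ℝ) : ℂ) *
        ((Real.sqrt (1 - ‖a j‖ ^ 2) : ℝ) : ℂ) := by
      rw [sqsqU (ha j), hA, hB]; ring
    rw [e1, e2, e3]
    rw [Finset.prod_mul_distrib]
    ring
  rw [Finset.sum_congr rfl hterm, ← Finset.mul_sum, tel]
  have hBprod : ∏ k ∈ s, B k = (∏ k ∈ s, (-(starRingEnd ℂ) (a k))) * ∏ k ∈ s, (μ - a k) :=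
    Finset.prod_mul_distrib
  rw [hBprod]
  ring

private lemma key0U {n : ℕ} (a : Fin n → ℂ) (ha : ∀ j, ‖a j‖ < 1) (μ : ℂ) :
    (∑ j : Fin n,
        (∏ k ∈ univ.filter (fun k : Fin n => (k : ℕ) < (j : ℕ)), (-(starRingEnd ℂ) (a k)))
        * (((Real.sqrt (1 - ‖a j‖ ^ 2) : ℝ) : ℂ) *
            ((Real.sqrt (1 - ‖a j‖ ^ 2) : ℝ) : ℂ))
        * (∏ k ∈ univ.filter (fun k : Fin n => (j : ℕ) < (k : ℕ)), (1 - (starRingEnd ℂ) (a k) * μ))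
        * (∏ k ∈ univ.filter (fun k : Fin n => (k : ℕ) < (j : ℕ)), (μ - a k)))
      + (∏ k : Fin n, (-(starRingEnd ℂ) (a k))) * (∏ k : Fin n, (μ - a k))
      = ∏ k : Fin n, (1 - (starRingEnd ℂ) (a k) * μ) := by
  set A : Fin n → ℂ := fun k => 1 - (starRingEnd ℂ) (a k) * μ with hA
  set B : Fin n → ℂ := fun k => (-(starRingEnd ℂ) (a k)) * (μ - a k) with hB
  have tel := telescopeU A B univ
  have hterm : ∀ j ∈ (univ : Finset (Fin n)),
      (∏ k ∈ univ.filter (fun k : Fin n => (k : ℕ) < (j : ℕ)), (-(starRingEnd ℂ) (a k)))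
        * (((Real.sqrt (1 - ‖a j‖ ^ 2) : ℝ) : ℂ) *
            ((Real.sqrt (1 - ‖a j‖ ^ 2) : ℝ) : ℂ))
        * (∏ k ∈ univ.filter (fun k : Fin n => (j : ℕ) < (k : ℕ)), (1 - (starRingEnd ℂ) (a k) * μ))
        * (∏ k ∈ univ.filter (fun k : Fin n => (k : ℕ) < (j : ℕ)), (μ - a k))
      = (∏ k ∈ univ.filter (· < j), B k) * ((A j - B j) * ∏ k ∈ univ.filter (j < ·), A k) := by
    intro j _
    have e1 : (univ.filter (· < j) : Finset (Fin n)) =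
        univ.filter (fun k : Fin n => (k : ℕ) < (j : ℕ)) := by
      apply Finset.filter_congr; intro k _; simp only [Fin.lt_def]
    have e2 : (univ.filter (j < ·) : Finset (Fin n)) =
        univ.filter (fun k : Fin n => (j : ℕ) < (k : ℕ)) := by
      apply Finset.filter_congr; intro k _; simp only [Fin.lt_def]
    have e3 : A j - B j = ((Real.sqrt (1 - ‖a j‖ ^ 2) : ℝ) : ℂ) *
        ((Real.sqrt (1 - ‖a j‖ ^ 2) : ℝ) : ℂ) := by
      rw [sqsqU (ha j), hA, hB]; ring
    rw [e1, e2, e3, Finset.prod_mul_distrib]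
    ring
  rw [Finset.sum_congr rfl hterm, tel]
  have hBprod : ∏ k : Fin n, B k = (∏ k : Fin n, (-(starRingEnd ℂ) (a k))) * ∏ k : Fin n, (μ - a k) :=
    Finset.prod_mul_distrib
  rw [hBprod]
  ring

private noncomputable def uvecU {n : ℕ} (a : Fin n → ℂ) (μ : ℂ) : Fin (n + 1) → ℂ := fun j =>
  if hj : (j : ℕ) < n then
    ((Real.sqrt (1 - ‖a ⟨j, hj⟩‖ ^ 2) : ℝ) : ℂ) *
      (∏ k ∈ univ.filter (fun k : Fin n => (j : ℕ) < (k : ℕ)), (1 - (starRingEnd ℂ) (a k) * μ)) *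
      (∏ k ∈ univ.filter (fun k : Fin n => (k : ℕ) < (j : ℕ)), (μ - a k))
  else ∏ k, (μ - a k)


private lemma Ulam_mulVec {n : ℕ} (a : Fin n → ℂ) (ha : ∀ j, ‖a j‖ < 1)
    (lam μ : ℂ)
    (heq : μ * ∏ j, (μ - a j) = lam * ∏ j, (1 - (starRingEnd ℂ) (a j) * μ)) :
    Ulam a lam *ᵥ uvecU a μ = μ • uvecU a μ := by
  funext i
  have hmv : (Ulam a lam *ᵥ uvecU a μ) i = ∑ j : Fin (n + 1), Ulam a lam i j * uvecU a μ j := by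
    simp [Matrix.mulVec, dotProduct]
  rw [hmv, Fin.sum_univ_castSucc]
  have hvlast : uvecU a μ (Fin.last n) = ∏ k, (μ - a k) := by
    simp [uvecU]
  have hvc : ∀ j : Fin n, uvecU a μ j.castSucc =
      ((Real.sqrt (1 - ‖a j‖ ^ 2) : ℝ) : ℂ) *
        (∏ k ∈ univ.filter (fun k : Fin n => (j : ℕ) < (k : ℕ)), (1 - (starRingEnd ℂ) (a k) * μ)) *
        (∏ k ∈ univ.filter (fun k : Fin n => (k : ℕ) < (j : ℕ)), (μ - a k)) := by
    intro j
    simp [uvecU, j.isLt, Fin.eta]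
  by_cases hi : (i : ℕ) < n
  · -- row i < n
    set i' : Fin n := ⟨(i : ℕ), hi⟩ with hi'
    have hUlast : Ulam a lam i (Fin.last n) =
        (∏ k ∈ univ.filter (fun k : Fin n => (i : ℕ) < (k : ℕ)), (-(starRingEnd ℂ) (a k))) *
          ((Real.sqrt (1 - ‖a i'‖ ^ 2) : ℝ) : ℂ) := by
      simp [Ulam, hi]
      left; rfl
    have hterm : ∀ j : Fin n, Ulam a lam i j.castSucc * uvecU a μ j.castSucc =
        (if j = i' then a i' * uvecU a μ i'.castSucc else 0) +
        (if (i : ℕ) < (j : ℕ) then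
          (∏ k ∈ univ.filter (fun k : Fin n => (i : ℕ) < (k : ℕ) ∧ (k : ℕ) < (j : ℕ)),
              (-(starRingEnd ℂ) (a k))) *
            ((Real.sqrt (1 - ‖a i'‖ ^ 2) : ℝ) : ℂ) *
            ((Real.sqrt (1 - ‖a j‖ ^ 2) : ℝ) : ℂ) *
            uvecU a μ j.castSucc
        else 0) := by
      intro j
      rcases lt_trichotomy (i : ℕ) (j : ℕ) with h | h | h
      · rw [if_neg (by simp [hi', Fin.ext_iff]; omega), if_pos h]
        simp only [Ulam, Matrix.of_apply, Fin.coe_castSucc, dif_pos hi, dif_pos j.isLt,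
          if_neg (Nat.ne_of_lt h), if_pos h, Fin.eta]
        ring
      · have hji : j = i' := by rw [hi', Fin.ext_iff]; exact h.symm
        rw [if_pos hji, if_neg (by omega), hji]
        simp only [Ulam, Matrix.of_apply, Fin.coe_castSucc, dif_pos hi, dif_pos i'.isLt,
          if_pos rfl, Fin.eta, add_zero]
        have : (i' : ℕ) = (i : ℕ) := rfl
        simp [hi', Fin.eta]
      · rw [if_neg (by simp [hi', Fin.ext_iff]; omega), if_neg (by omega)]
        simp only [Ulam, Matrix.of_apply, Fin.coe_castSucc, dif_pos hi, dif_pos j.isLt,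
          if_neg (by omega : ¬ (i : ℕ) = (j : ℕ)), if_neg (by omega : ¬ (i : ℕ) < (j : ℕ))]
        simp
    rw [Finset.sum_congr rfl (fun j _ => hterm j), Finset.sum_add_distrib,
      Finset.sum_ite_eq' univ i', if_pos (mem_univ i'), ← Finset.sum_filter]
    have hii : i'.castSucc = i := by ext; rfl
    rw [hUlast, hvlast]
    have hrhs : (μ • uvecU a μ) i = μ * uvecU a μ i'.castSucc := by
      rw [hii]; simp
    rw [hrhs, hvc i']
    have hsum2 : ∀ j ∈ univ.filter (fun k : Fin n => (i : ℕ) < (k : ℕ)),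
        (∏ k ∈ Finset.filter (fun k : Fin n => (i : ℕ) < (k : ℕ) ∧ (k : ℕ) < (j : ℕ)) Finset.univ,
            -(starRingEnd ℂ) (a k)) *
            ((Real.sqrt (1 - ‖a i'‖ ^ 2) : ℝ) : ℂ) *
            ((Real.sqrt (1 - ‖a j‖ ^ 2) : ℝ) : ℂ) *
          uvecU a μ j.castSucc
        = (((Real.sqrt (1 - ‖a i'‖ ^ 2) : ℝ) : ℂ) *
            ∏ k ∈ univ.filter (fun k : Fin n => (k : ℕ) < (i' : ℕ)), (μ - a k)) *
          ((∏ k ∈ univ.filter (fun k : Fin n => (i' : ℕ) < (k : ℕ) ∧ (k : ℕ) < (j : ℕ)),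
              (-(starRingEnd ℂ) (a k)))
            * (((Real.sqrt (1 - ‖a j‖ ^ 2) : ℝ) : ℂ) *
                ((Real.sqrt (1 - ‖a j‖ ^ 2) : ℝ) : ℂ))
            * (∏ k ∈ univ.filter (fun k : Fin n => (j : ℕ) < (k : ℕ)),
                (1 - (starRingEnd ℂ) (a k) * μ))
            * ((μ - a i') *
                ∏ k ∈ univ.filter (fun k : Fin n => (i' : ℕ) < (k : ℕ) ∧ (k : ℕ) < (j : ℕ)),
                  (μ - a k))) := by
      intro j hj
      have hij : (i' : ℕ) < (j : ℕ) := by simp at hj; exact hj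
      rw [hvc j, splitLtU i' j hij (fun k => μ - a k)]
      ring
    rw [Finset.sum_congr rfl hsum2, ← Finset.mul_sum]
    rw [splitUnivU i' (fun k => μ - a k)]
    linear_combination (((Real.sqrt (1 - ‖a i'‖ ^ 2) : ℝ) : ℂ) *
      ∏ k ∈ univ.filter (fun k : Fin n => (k : ℕ) < (i' : ℕ)), (μ - a k)) * keyU a ha μ i'
  · -- last row
    have hilast : i = Fin.last n := by
      have h2 := i.isLt
      ext
      simp only [Fin.val_last]
      omega
    subst hilast
    have hUlast2 : Ulam a lam (Fin.last n) (Fin.last n) =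
        lam * ∏ k : Fin n, (-(starRingEnd ℂ) (a k)) := by
      simp [Ulam]
    have hUj : ∀ j : Fin n, Ulam a lam (Fin.last n) j.castSucc =
        lam * (∏ k ∈ univ.filter (fun k : Fin n => (k : ℕ) < (j : ℕ)), (-(starRingEnd ℂ) (a k))) *
          ((Real.sqrt (1 - ‖a j‖ ^ 2) : ℝ) : ℂ) := by
      intro j
      simp [Ulam, j.isLt, Fin.eta]
    have hterm2 : ∀ j ∈ (univ : Finset (Fin n)),
        Ulam a lam (Fin.last n) j.castSucc * uvecU a μ j.castSucc =
        lam * ((∏ k ∈ univ.filter (fun k : Fin n => (k : ℕ) < (j : ℕ)), (-(starRingEnd ℂ) (a k)))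
          * (((Real.sqrt (1 - ‖a j‖ ^ 2) : ℝ) : ℂ) *
              ((Real.sqrt (1 - ‖a j‖ ^ 2) : ℝ) : ℂ))
          * (∏ k ∈ univ.filter (fun k : Fin n => (j : ℕ) < (k : ℕ)), (1 - (starRingEnd ℂ) (a k) * μ))
          * (∏ k ∈ univ.filter (fun k : Fin n => (k : ℕ) < (j : ℕ)), (μ - a k))) := by
      intro j _
      rw [hUj j, hvc j]
      ring
    rw [Finset.sum_congr rfl hterm2, ← Finset.mul_sum, hUlast2, hvlast]
    have hrhs : (μ • uvecU a μ) (Fin.last n) = μ * ∏ k, (μ - a k) := by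
      rw [Pi.smul_apply, hvlast, smul_eq_mul]
    rw [hrhs]
    linear_combination lam * key0U a ha μ - heq


private lemma sqdiffU (μ b : ℂ) :
    Complex.normSq (1 - (starRingEnd ℂ) b * μ) - Complex.normSq (μ - b)
      = (1 - Complex.normSq μ) * (1 - Complex.normSq b) := by
  simp only [Complex.normSq_apply, Complex.sub_re, Complex.sub_im, Complex.mul_re,
    Complex.mul_im, Complex.one_re, Complex.one_im, Complex.conj_re, Complex.conj_im]
  ring

private lemma absle1U {μ b : ℂ} (hb : ‖b‖ < 1) (hμ : ‖μ‖ ≤ 1) :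
    ‖μ - b‖ ≤ ‖1 - (starRingEnd ℂ) b * μ‖ := by
  have h := sqdiffU μ b
  have h1 : Complex.normSq μ ≤ 1 := by
    rw [← Complex.sq_norm]; nlinarith [norm_nonneg μ]
  have h2 : Complex.normSq b < 1 := by
    rw [← Complex.sq_norm]; nlinarith [norm_nonneg b]
  have h3 : Complex.normSq (μ - b) ≤ Complex.normSq (1 - (starRingEnd ℂ) b * μ) := by nlinarith
  rw [← Real.sqrt_sq (norm_nonneg (μ - b)), ← Real.sqrt_sq
    (norm_nonneg (1 - (starRingEnd ℂ) b * μ))]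
  apply Real.sqrt_le_sqrt
  rw [Complex.sq_norm, Complex.sq_norm]
  exact h3

private lemma absge1U {μ b : ℂ} (hb : ‖b‖ < 1) (hμ : 1 ≤ ‖μ‖) :
    ‖1 - (starRingEnd ℂ) b * μ‖ ≤ ‖μ - b‖ := by
  have h := sqdiffU μ b
  have h1 : 1 ≤ Complex.normSq μ := by
    rw [← Complex.sq_norm]; nlinarith
  have h2 : Complex.normSq b < 1 := by
    rw [← Complex.sq_norm]; nlinarith [norm_nonneg b]
  have h3 : Complex.normSq (1 - (starRingEnd ℂ) b * μ) ≤ Complex.normSq (μ - b) := by nlinarith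
  rw [← Real.sqrt_sq (norm_nonneg (μ - b)), ← Real.sqrt_sq
    (norm_nonneg (1 - (starRingEnd ℂ) b * μ))]
  apply Real.sqrt_le_sqrt
  rw [Complex.sq_norm, Complex.sq_norm]
  exact h3

private lemma mod1U {n : ℕ} {a : Fin n → ℂ} (ha : ∀ j, ‖a j‖ < 1)
    {lam : ℂ} (hlam : ‖lam‖ = 1) {μ : ℂ}
    (h : μ * ∏ j, (μ - a j) = lam * ∏ j, (1 - (starRingEnd ℂ) (a j) * μ)) :
    ‖μ‖ = 1 := by
  have habs : ‖μ‖ * ∏ j, ‖μ - a j‖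
      = ∏ j, ‖1 - (starRingEnd ℂ) (a j) * μ‖ := by
    have := congrArg (‖·‖) h
    rwa [norm_mul, norm_mul, norm_prod, norm_prod, hlam, one_mul] at this
  by_contra hne
  rcases lt_or_gt_of_ne hne with hlt | hgt
  · -- |μ| < 1
    have hfac : ∀ j ∈ (univ : Finset (Fin n)),
        ‖μ - a j‖ ≤ ‖1 - (starRingEnd ℂ) (a j) * μ‖ :=
      fun j _ => absle1U (ha j) hlt.le
    have hprod : ∏ j, ‖μ - a j‖ ≤ ∏ j, ‖1 - (starRingEnd ℂ) (a j) * μ‖ :=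
      Finset.prod_le_prod (fun j _ => norm_nonneg _) hfac
    have hpos : 0 < ∏ j, ‖1 - (starRingEnd ℂ) (a j) * μ‖ := by
      apply Finset.prod_pos
      intro j _
      rw [norm_pos_iff]
      intro h0
      have : ‖(starRingEnd ℂ) (a j) * μ‖ = 1 := by
        have : (starRingEnd ℂ) (a j) * μ = 1 := by linear_combination -h0
        rw [this, norm_one]
      rw [norm_mul, Complex.norm_conj] at this
      nlinarith [ha j, norm_nonneg μ, norm_nonneg (a j)]
    nlinarith [norm_nonneg μ, Finset.prod_nonneg
      (fun j (_ : j ∈ (univ : Finset (Fin n))) => norm_nonneg (μ - a j))]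
  · -- |μ| > 1
    have hfac : ∀ j ∈ (univ : Finset (Fin n)),
        ‖1 - (starRingEnd ℂ) (a j) * μ‖ ≤ ‖μ - a j‖ :=
      fun j _ => absge1U (ha j) hgt.le
    have hprod : ∏ j, ‖1 - (starRingEnd ℂ) (a j) * μ‖ ≤ ∏ j, ‖μ - a j‖ :=
      Finset.prod_le_prod (fun j _ => norm_nonneg _) hfac
    have hpos : 0 < ∏ j, ‖μ - a j‖ := by
      apply Finset.prod_pos
      intro j _
      rw [norm_pos_iff, sub_ne_zero]
      intro h0
      rw [h0] at hgt
      exact absurd (ha j) (by linarith)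
    nlinarith

private lemma termIdU {μ c : ℂ} (hμ : Complex.normSq μ = 1) (hc : ‖c‖ < 1) :
    μ * (μ - c)⁻¹ + μ * (starRingEnd ℂ) c * (1 - (starRingEnd ℂ) c * μ)⁻¹
      = (((1 - Complex.normSq c) / Complex.normSq (μ - c) : ℝ) : ℂ) := by
  have habs : ‖μ‖ = 1 := by
    rw [← Complex.sq_norm] at hμ
    nlinarith [norm_nonneg μ]
  have hne1 : μ - c ≠ 0 := by
    intro h0
    rw [sub_eq_zero] at h0
    rw [h0] at habs
    exact absurd habs (ne_of_lt hc)
  have hne2 : 1 - (starRingEnd ℂ) c * μ ≠ 0 := by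
    intro h0
    have h1 : (starRingEnd ℂ) c * μ = 1 := by linear_combination -h0
    have h2 : ‖(starRingEnd ℂ) c * μ‖ = 1 := by rw [h1, norm_one]
    rw [norm_mul, Complex.norm_conj, habs, mul_one] at h2
    exact absurd h2 (ne_of_lt hc)
  have hμμ : μ * (starRingEnd ℂ) μ = 1 := by
    rw [Complex.mul_conj, hμ]; norm_num
  have hμ0 : μ ≠ 0 := by
    intro h0; rw [h0] at hμμ; simp at hμμ
  have hcμ : (starRingEnd ℂ) μ ≠ 0 := by
    intro h0; rw [h0] at hμμ; simp at hμμ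
  have hD : ((Complex.normSq (μ - c) : ℝ) : ℂ)
      = (μ - c) * ((starRingEnd ℂ) μ - (starRingEnd ℂ) c) := by
    rw [← Complex.mul_conj, _root_.map_sub]
  have hC : ((Complex.normSq c : ℝ) : ℂ) = c * (starRingEnd ℂ) c := by
    rw [← Complex.mul_conj]
  have hDne : ((starRingEnd ℂ) μ - (starRingEnd ℂ) c) ≠ 0 := by
    intro h0
    have h1 : (starRingEnd ℂ) (μ - c) = 0 := by rw [_root_.map_sub]; exact h0
    have h2 := congrArg (starRingEnd ℂ) h1
    simp only [Complex.conj_conj, _root_.map_zero] at h2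
    exact hne1 h2
  rw [Complex.ofReal_div, Complex.ofReal_sub, Complex.ofReal_one, hD, hC]
  have hne2' : 1 - μ * (starRingEnd ℂ) c ≠ 0 := by rw [mul_comm]; exact hne2
  field_simp
  linear_combination (1 - c * (starRingEnd ℂ) c) * hμμ

private lemma noncritU {n : ℕ} {a : Fin n → ℂ} (ha : ∀ j, ‖a j‖ < 1)
    {lam : ℂ} (hlam : ‖lam‖ = 1) {μ : ℂ}
    (hroot : μ * ∏ j, (μ - a j) = lam * ∏ j, (1 - (starRingEnd ℂ) (a j) * μ))
    (hder : (∏ j, (μ - a j)) + μ * (∑ j, ∏ k ∈ univ.erase j, (μ - a k))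
        + lam * ∑ j, (∏ k ∈ univ.erase j, (1 - (starRingEnd ℂ) (a k) * μ)) * (starRingEnd ℂ) (a j)
        = 0) : False := by
  have habs : ‖μ‖ = 1 := mod1U ha hlam hroot
  have hμ1 : Complex.normSq μ = 1 := by
    rw [← Complex.sq_norm, habs]; norm_num
  have hne1 : ∀ j, μ - a j ≠ 0 := by
    intro j h0
    rw [sub_eq_zero] at h0
    rw [h0] at habs
    exact absurd habs (ne_of_lt (ha j))
  have hne2 : ∀ j, 1 - (starRingEnd ℂ) (a j) * μ ≠ 0 := by
    intro j h0
    have h1 : (starRingEnd ℂ) (a j) * μ = 1 := by linear_combination -h0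
    have h2 : ‖(starRingEnd ℂ) (a j) * μ‖ = 1 := by rw [h1, norm_one]
    rw [norm_mul, Complex.norm_conj, habs, mul_one] at h2
    exact absurd h2 (ne_of_lt (ha j))
  have hF : (∏ j, (μ - a j)) ≠ 0 := Finset.prod_ne_zero_iff.mpr (fun j _ => hne1 j)
  have herase1 : ∀ j : Fin n, (∏ k ∈ univ.erase j, (μ - a k))
      = (∏ k, (μ - a k)) * (μ - a j)⁻¹ := by
    intro j
    rw [eq_mul_inv_iff_mul_eq₀ (hne1 j)]
    exact Finset.prod_erase_mul univ _ (mem_univ j)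
  have herase2 : ∀ j : Fin n, (∏ k ∈ univ.erase j, (1 - (starRingEnd ℂ) (a k) * μ))
      = (∏ k, (1 - (starRingEnd ℂ) (a k) * μ)) * (1 - (starRingEnd ℂ) (a j) * μ)⁻¹ := by
    intro j
    rw [eq_mul_inv_iff_mul_eq₀ (hne2 j)]
    exact Finset.prod_erase_mul univ _ (mem_univ j)
  rw [Finset.sum_congr rfl (fun j _ => herase1 j)] at hder
  have h6 : ∑ j : Fin n, (∏ k ∈ univ.erase j, (1 - (starRingEnd ℂ) (a k) * μ)) * (starRingEnd ℂ) (a j)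
      = ∑ j : Fin n, ((∏ k, (1 - (starRingEnd ℂ) (a k) * μ)) * (1 - (starRingEnd ℂ) (a j) * μ)⁻¹)
          * (starRingEnd ℂ) (a j) :=
    Finset.sum_congr rfl (fun j _ => by rw [herase2 j])
  rw [h6] at hder
  have hmain : 1 + ∑ j, (μ * (μ - a j)⁻¹
      + μ * (starRingEnd ℂ) (a j) * (1 - (starRingEnd ℂ) (a j) * μ)⁻¹) = 0 := by
    have hz : (∏ j, (μ - a j)) * (1 + ∑ j, (μ * (μ - a j)⁻¹
        + μ * (starRingEnd ℂ) (a j) * (1 - (starRingEnd ℂ) (a j) * μ)⁻¹)) = 0 := by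
      rw [mul_add, mul_one, Finset.mul_sum]
      have hsplit : ∀ j ∈ (univ : Finset (Fin n)),
          (∏ j, (μ - a j)) * (μ * (μ - a j)⁻¹
            + μ * (starRingEnd ℂ) (a j) * (1 - (starRingEnd ℂ) (a j) * μ)⁻¹)
          = μ * ((∏ k, (μ - a k)) * (μ - a j)⁻¹)
            + lam * ((∏ k, (1 - (starRingEnd ℂ) (a k) * μ)) * (1 - (starRingEnd ℂ) (a j) * μ)⁻¹
                * (starRingEnd ℂ) (a j)) := by
        intro j _
        have := hroot
        linear_combination ((starRingEnd ℂ) (a j) * (1 - (starRingEnd ℂ) (a j) * μ)⁻¹) * hroot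
      have e1 : ∑ j : Fin n, μ * ((∏ k, (μ - a k)) * (μ - a j)⁻¹)
          = μ * ∑ j : Fin n, (∏ k, (μ - a k)) * (μ - a j)⁻¹ := (Finset.mul_sum _ _ _).symm
      have e2 : ∑ j : Fin n, lam * ((∏ k, (1 - (starRingEnd ℂ) (a k) * μ))
            * (1 - (starRingEnd ℂ) (a j) * μ)⁻¹ * (starRingEnd ℂ) (a j))
          = lam * ∑ j : Fin n, (∏ k, (1 - (starRingEnd ℂ) (a k) * μ))
            * (1 - (starRingEnd ℂ) (a j) * μ)⁻¹ * (starRingEnd ℂ) (a j) := (Finset.mul_sum _ _ _).symm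
      rw [Finset.sum_congr rfl hsplit, Finset.sum_add_distrib, e1, e2]
      linear_combination hder
    rcases mul_eq_zero.mp hz with h | h
    · exact absurd h hF
    · exact h
  have hterm : ∀ j ∈ (univ : Finset (Fin n)),
      μ * (μ - a j)⁻¹ + μ * (starRingEnd ℂ) (a j) * (1 - (starRingEnd ℂ) (a j) * μ)⁻¹
      = (((1 - Complex.normSq (a j)) / Complex.normSq (μ - a j) : ℝ) : ℂ) :=
    fun j _ => termIdU hμ1 (ha j)
  rw [Finset.sum_congr rfl hterm, ← Complex.ofReal_sum] at hmain
  have hre := congrArg Complex.re hmain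
  simp only [Complex.add_re, Complex.one_re, Complex.ofReal_re, Complex.zero_re] at hre
  have hsum : (0 : ℝ) ≤ ∑ j : Fin n, (1 - Complex.normSq (a j)) / Complex.normSq (μ - a j) := by
    apply Finset.sum_nonneg
    intro j _
    apply div_nonneg
    · have : Complex.normSq (a j) ≤ 1 := by
        rw [← Complex.sq_norm]; nlinarith [norm_nonneg (a j), ha j]
      linarith
    · exact Complex.normSq_nonneg _
  linarith

private lemma derivFinsetProdU {ι : Type*} [DecidableEq ι] (s : Finset ι) (f : ι → Polynomial ℂ) :
    Polynomial.derivative (∏ i ∈ s, f i) = ∑ i ∈ s, (∏ j ∈ s.erase i, f j) * Polynomial.derivative (f i) := by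
  induction s using Finset.induction_on with
  | empty => simp
  | @insert x s hx ih =>
    rw [Finset.prod_insert hx, derivative_mul, ih, Finset.sum_insert hx, Finset.erase_insert hx]
    have e : ∀ i ∈ s, (∏ j ∈ (insert x s).erase i, f j) * Polynomial.derivative (f i)
        = f x * ((∏ j ∈ s.erase i, f j) * Polynomial.derivative (f i)) := by
      intro i hi
      have hne : i ≠ x := fun h => hx (h ▸ hi)
      rw [Finset.erase_insert_of_ne hne.symm, Finset.prod_insert (fun h => hx (Finset.mem_of_mem_erase h))]
      ring
    rw [Finset.sum_congr rfl e, ← Finset.mul_sum]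
    ring

private noncomputable def PUdef (a : Fin n → ℂ) (lam : ℂ) : Polynomial ℂ :=
  X * ∏ j, (X - C (a j)) - C lam * ∏ j, (1 - C ((starRingEnd ℂ) (a j)) * X)

private lemma PU_eval (a : Fin n → ℂ) (lam μ : ℂ) :
    (PUdef a lam).eval μ = μ * ∏ j, (μ - a j) - lam * ∏ j, (1 - (starRingEnd ℂ) (a j) * μ) := by
  simp [PUdef, eval_prod]

private lemma PU_deriv_eval (a : Fin n → ℂ) (lam μ : ℂ) :
    (derivative (PUdef a lam)).eval μ =
      (∏ j, (μ - a j)) + μ * (∑ j, ∏ k ∈ univ.erase j, (μ - a k))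
        + lam * ∑ j, (∏ k ∈ univ.erase j, (1 - (starRingEnd ℂ) (a k) * μ)) * (starRingEnd ℂ) (a j) := by
  have hd1 : derivative (PUdef a lam) = (∏ j, (X - C (a j)))
      + X * ∑ j : Fin n, (∏ k ∈ univ.erase j, (X - C (a k)))
      + C lam * ∑ j : Fin n, (∏ k ∈ univ.erase j, (1 - C ((starRingEnd ℂ) (a k)) * X))
          * C ((starRingEnd ℂ) (a j)) := by
    rw [PUdef, derivative_sub, derivative_mul, derivative_X, one_mul, derivative_mul,
      derivative_C, zero_mul, zero_add, derivFinsetProdU, derivFinsetProdU]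
    have e1 : ∀ j ∈ (univ : Finset (Fin n)),
        (∏ k ∈ univ.erase j, (X - C (a k))) * derivative (X - C (a j))
        = ∏ k ∈ univ.erase j, (X - C (a k)) := by
      intro j _
      rw [derivative_sub, derivative_X, derivative_C, sub_zero, mul_one]
    have e2 : ∀ j ∈ (univ : Finset (Fin n)),
        (∏ k ∈ univ.erase j, (1 - C ((starRingEnd ℂ) (a k)) * X))
            * derivative (1 - C ((starRingEnd ℂ) (a j)) * X)
        = -((∏ k ∈ univ.erase j, (1 - C ((starRingEnd ℂ) (a k)) * X))
            * C ((starRingEnd ℂ) (a j))) := by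
      intro j _
      rw [derivative_sub, derivative_one, derivative_mul, derivative_C, derivative_X,
        zero_mul, zero_sub, mul_one]
      ring
    rw [Finset.sum_congr rfl e1, Finset.sum_congr rfl e2]
    rw [Finset.sum_neg_distrib]
    ring
  rw [hd1]
  simp [eval_prod, eval_finset_sum]

private lemma PU_monic (a : Fin n → ℂ) (lam : ℂ) :
    (PUdef a lam).Monic ∧ (PUdef a lam).natDegree = n + 1 := by
  have hm1 : (X * ∏ j, (X - C (a j)) : Polynomial ℂ).Monic :=
    monic_X.mul (monic_prod_of_monic _ _ fun j _ => monic_X_sub_C _)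
  have hd1 : (X * ∏ j, (X - C (a j)) : Polynomial ℂ).natDegree = n + 1 := by
    rw [natDegree_mul X_ne_zero (monic_prod_of_monic _ _
      fun j _ => monic_X_sub_C (a j)).ne_zero, natDegree_X, natDegree_prod _ _
      (fun j _ => (monic_X_sub_C (a j)).ne_zero)]
    simp [natDegree_X_sub_C]; ring
  have hdeg1 : (X * ∏ j, (X - C (a j)) : Polynomial ℂ).degree = (n + 1 : ℕ) := by
    rw [degree_eq_natDegree hm1.ne_zero, hd1]
  have hdeg2 : (C lam * ∏ j, (1 - C ((starRingEnd ℂ) (a j)) * X) : Polynomial ℂ).degree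
      ≤ (n : ℕ) := by
    refine le_trans (degree_le_natDegree) ?_
    have h1 : (C lam * ∏ j, (1 - C ((starRingEnd ℂ) (a j)) * X) : Polynomial ℂ).natDegree
        ≤ n := by
      refine le_trans (natDegree_mul_le) ?_
      rw [natDegree_C, zero_add]
      refine le_trans (natDegree_prod_le _ _) ?_
      refine le_trans (Finset.sum_le_sum
        (fun j _ => ?_ : ∀ j ∈ univ, (1 - C ((starRingEnd ℂ) (a j)) * X).natDegree ≤ 1)) ?_
      · refine le_trans (natDegree_sub_le _ _) ?_
        simp [natDegree_C_mul_le]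
        exact le_trans (natDegree_mul_le) (by simp)
      · simp
    exact_mod_cast Nat.cast_le.mpr h1
  have hlt : (C lam * ∏ j, (1 - C ((starRingEnd ℂ) (a j)) * X) : Polynomial ℂ).degree
      < (X * ∏ j, (X - C (a j)) : Polynomial ℂ).degree := by
    rw [hdeg1]
    exact lt_of_le_of_lt hdeg2 (by exact_mod_cast Nat.cast_lt.mpr (Nat.lt_succ_self n))
  constructor
  · exact hm1.sub_of_left hlt
  · rw [PUdef]
    have := degree_sub_eq_left_of_degree_lt hlt
    rw [natDegree, this, hdeg1]
    rfl

private lemma PU_roots (a : Fin n → ℂ) (ha : ∀ j, ‖a j‖ < 1)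
    {lam : ℂ} (hlam : ‖lam‖ = 1) :
    Multiset.card (PUdef a lam).roots = n + 1 ∧ (PUdef a lam).roots.Nodup := by
  obtain ⟨hm, hd⟩ := PU_monic a lam
  have hne : PUdef a lam ≠ 0 := hm.ne_zero
  constructor
  · have hsplit : Splits (PUdef a lam) := IsAlgClosed.splits _
    have := hsplit.natDegree_eq_card_roots.symm
    rw [this, hd]
  · rw [Multiset.nodup_iff_count_le_one]
    intro μ
    rw [count_roots]
    by_contra hgt
    push_neg at hgt
    have h2 : 2 ≤ rootMultiplicity μ (PUdef a lam) := hgt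
    have hdvd : (X - C μ) ^ 2 ∣ PUdef a lam :=
      (pow_dvd_pow _ h2).trans ((PUdef a lam).pow_rootMultiplicity_dvd μ)
    obtain ⟨q, hq⟩ := hdvd
    have heval : (PUdef a lam).eval μ = 0 := by simp [hq]
    have hdeval : (derivative (PUdef a lam)).eval μ = 0 := by
      rw [hq, derivative_mul, derivative_pow]
      simp
    rw [PU_eval] at heval
    rw [PU_deriv_eval] at hdeval
    exact noncritU ha hlam (by linear_combination heval) hdeval

private lemma charpolyEvalU {m : ℕ} (M : Matrix (Fin m) (Fin m) ℂ) (μ : ℂ) :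
    M.charpoly.eval μ = (algebraMap ℂ (Matrix (Fin m) (Fin m) ℂ) μ - M).det := by
  rw [Matrix.charpoly]
  have h := RingHom.map_det (Polynomial.evalRingHom μ) (Matrix.charmatrix M)
  rw [show Polynomial.eval μ (Matrix.charmatrix M).det
      = (Polynomial.evalRingHom μ) (Matrix.charmatrix M).det from rfl, h]
  congr 1
  ext i j
  by_cases hij : i = j
  · subst hij
    simp [Matrix.charmatrix_apply_eq, Matrix.algebraMap_eq_diagonal, Matrix.diagonal_apply]
  · simp [Matrix.charmatrix_apply_ne _ _ _ hij, Matrix.algebraMap_eq_diagonal,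
      Matrix.diagonal_apply, hij]

private lemma specIffU {m : ℕ} (M : Matrix (Fin m) (Fin m) ℂ) (μ : ℂ) :
    μ ∈ spectrum ℂ M ↔ M.charpoly.eval μ = 0 := by
  rw [spectrum.mem_iff, Matrix.isUnit_iff_isUnit_det, isUnit_iff_ne_zero, not_not,
    charpolyEvalU]

/-- The eigenvalues of `U^λ` are exactly the `n + 1` solutions `μ` (all of modulus one)
of `μ·∏ (μ - a_j) = λ·∏ (1 - ā_j μ)`, i.e. the points that `z·B(z)` maps to `λ`, where `B`
is the finite Blaschke product with zeros `a_1, …, a_n`. -/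
theorem Ulam_eigenvalues (n : ℕ) (a : Fin n → ℂ) (ha : ∀ j, ‖a j‖ < 1)
    (lam : ℂ) (hlam : ‖lam‖ = 1) :
    spectrum ℂ (Ulam a lam) =
      {μ : ℂ | μ * ∏ j, (μ - a j) = lam * ∏ j, (1 - (starRingEnd ℂ) (a j) * μ)} ∧
    {μ : ℂ | μ * ∏ j, (μ - a j) = lam * ∏ j, (1 - (starRingEnd ℂ) (a j) * μ)}.ncard = n + 1 ∧
    ∀ μ ∈ {μ : ℂ | μ * ∏ j, (μ - a j) = lam * ∏ j, (1 - (starRingEnd ℂ) (a j) * μ)},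
      ‖μ‖ = 1 := by
  set S := {μ : ℂ | μ * ∏ j, (μ - a j) = lam * ∏ j, (1 - (starRingEnd ℂ) (a j) * μ)} with hSdef
  have hS3 : ∀ μ ∈ S, ‖μ‖ = 1 := fun μ h => mod1U ha hlam h
  obtain ⟨hPm, hPd⟩ := PU_monic a lam
  obtain ⟨hcard, hnodup⟩ := PU_roots a ha hlam
  -- S as a finset
  have hfin : S = ↑(PUdef a lam).roots.toFinset := by
    ext μ
    simp only [hSdef, Set.mem_setOf_eq, Finset.coe_sort_coe, Multiset.mem_toFinset,
      Finset.mem_coe, mem_roots hPm.ne_zero, IsRoot.def, PU_eval]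
    constructor
    · intro h; linear_combination h
    · intro h; linear_combination h
  have hncard : S.ncard = n + 1 := by
    rw [hfin, Set.ncard_coe_finset, Multiset.toFinset_card_of_nodup hnodup, hcard]
  -- S ⊆ spectrum
  have hsub : S ⊆ spectrum ℂ (Ulam a lam) := by
    intro μ hμ
    have habs : ‖μ‖ = 1 := hS3 μ hμ
    have hne1 : ∀ j, μ - a j ≠ 0 := by
      intro j h0
      rw [sub_eq_zero] at h0
      rw [h0] at habs
      exact absurd habs (ne_of_lt (ha j))
    have hvne : uvecU a μ ≠ 0 := by
      intro h0
      have h1 : uvecU a μ (Fin.last n) = 0 := by rw [h0]; rfl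
      have h2 : uvecU a μ (Fin.last n) = ∏ k, (μ - a k) := by simp [uvecU]
      rw [h2] at h1
      exact (Finset.prod_ne_zero_iff.mpr (fun j _ => hne1 j)) h1
    have hmv : (algebraMap ℂ (Matrix (Fin (n+1)) (Fin (n+1)) ℂ) μ - Ulam a lam) *ᵥ uvecU a μ
        = 0 := by
      rw [Matrix.sub_mulVec, Algebra.algebraMap_eq_smul_one, Matrix.smul_mulVec,
        Matrix.one_mulVec, Ulam_mulVec a ha lam μ hμ, sub_self]
    have hdet : (algebraMap ℂ (Matrix (Fin (n+1)) (Fin (n+1)) ℂ) μ - Ulam a lam).det = 0 :=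
      (Matrix.exists_mulVec_eq_zero_iff).mp ⟨uvecU a μ, hvne, hmv⟩
    rw [spectrum.mem_iff, Matrix.isUnit_iff_isUnit_det, isUnit_iff_ne_zero, not_not]
    exact hdet
  -- spectrum = S
  have hchar_ne : (Ulam a lam).charpoly ≠ 0 := (Matrix.charpoly_monic _).ne_zero
  have hspec : spectrum ℂ (Ulam a lam) = ↑((Ulam a lam).charpoly.roots.toFinset) := by
    ext μ
    simp only [Finset.coe_sort_coe, Multiset.mem_toFinset, Finset.mem_coe,
      mem_roots hchar_ne, IsRoot.def]
    rw [specIffU]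
  have hsubF : (PUdef a lam).roots.toFinset ⊆ (Ulam a lam).charpoly.roots.toFinset := by
    intro μ hμ
    have : μ ∈ S := by rw [hfin]; exact hμ
    have h2 := hsub this
    rw [hspec] at h2
    exact h2
  have hcardle : ((Ulam a lam).charpoly.roots.toFinset).card
      ≤ ((PUdef a lam).roots.toFinset).card := by
    have h1 : ((Ulam a lam).charpoly.roots.toFinset).card
        ≤ Multiset.card (Ulam a lam).charpoly.roots := Multiset.toFinset_card_le _
    have h2 : Multiset.card (Ulam a lam).charpoly.roots ≤ (Ulam a lam).charpoly.natDegree :=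
      card_roots' _
    have h3 : (Ulam a lam).charpoly.natDegree = n + 1 := by
      rw [Matrix.charpoly_natDegree_eq_dim]
      simp
    rw [Multiset.toFinset_card_of_nodup hnodup, hcard]
    omega
  have heqF : (PUdef a lam).roots.toFinset = (Ulam a lam).charpoly.roots.toFinset :=
    Finset.eq_of_subset_of_card_le hsubF hcardle
  refine ⟨?_, hncard, hS3⟩
  rw [hspec, ← heqF, ← hfin]
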